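/- For x, y ∈ ℕ let r(x,y) be the number of sequences a₁a₂⋯a_x with a₁ = 0 and a_j ∈ {0,1} for 2 ≤ j ≤ x, having exactly y isolated elements, where a_j is called isolated if it differs from every element in a neighboring position (a_j ≠ a_{j−1} whenever j > 1, and a_j ≠ a_{j+1} whenever j < x; in particular, for x = 1 the single element is isolated). Let R = Σ_{(x,y) ∈ ℕ²} r(x,y) · u^x v^y ∈ ℚ⟦u,v⟧. Then (1 − u − u·v − u² + u²·v) · R = 1 − u in ℚ⟦u,v⟧. -/

import Mathlib

/-- `a j` is isolated in the sequence `a` if it differs from every element in a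
neighboring position. -/
def IsIsolated {x : ℕ} (a : Fin x → Bool) (i : Fin x) : Prop :=
  ∀ j : Fin x, ((j : ℕ) + 1 = (i : ℕ) ∨ (i : ℕ) + 1 = (j : ℕ)) → a i ≠ a j


instance instDecIsIso {x : ℕ} (a : Fin x → Bool) : DecidablePred (IsIsolated a) := fun i => by
  unfold IsIsolated; infer_instance

def iso {x : ℕ} (a : Fin x → Bool) : ℕ :=
  (Finset.univ.filter (fun i => IsIsolated a i)).card

lemma iso_eq_sum {x : ℕ} (a : Fin x → Bool) :
    iso a = ∑ i : Fin x, if IsIsolated a i then 1 else 0 := by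
  rw [iso, Finset.card_filter]

section snoc
variable {x : ℕ} (a' : Fin (x + 1) → Bool) (b : Bool)


lemma snoc_of_lt (j : Fin (x + 2))
    (h : (j : ℕ) < x + 1) : Fin.snoc (α := fun _ => Bool) a' b j = a' ⟨(j : ℕ), h⟩ := by
  simp only [Fin.snoc, h, dif_pos, cast_eq]
  rfl

lemma isIso_last :
    IsIsolated (Fin.snoc a' b) (Fin.last (x + 1)) ↔ b ≠ a' (Fin.last x) := by
  constructor
  · intro h
    have := h (Fin.castSucc (Fin.last x)) (by simp)
    simpa using this
  · intro h j hj
    rcases hj with hj | hj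
    · have : j = Fin.castSucc (Fin.last x) := by
        apply Fin.ext; simp at hj ⊢; omega
      subst this
      simpa using h
    · simp at hj; omega

lemma isIso_castSucc_lt (i : Fin (x + 1)) (hi : (i : ℕ) < x) :
    IsIsolated (Fin.snoc a' b) (Fin.castSucc i) ↔ IsIsolated a' i := by
  constructor
  · intro h j hj
    have := h (Fin.castSucc j) (by simpa using hj)
    simpa using this
  · intro h j hj
    have hjx : (j : ℕ) < x + 1 := by simp at hj; omega
    rw [snoc_of_lt a' b j hjx]
    have := h ⟨(j : ℕ), hjx⟩ (by simpa using hj)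
    simpa using this

lemma isIso_castSucc_last :
    IsIsolated (Fin.snoc a' b) (Fin.castSucc (Fin.last x)) ↔
      IsIsolated a' (Fin.last x) ∧ a' (Fin.last x) ≠ b := by
  constructor
  · intro h
    constructor
    · intro j hj
      rcases hj with hj | hj
      · have := h (Fin.castSucc j) (by simp at hj ⊢; omega)
        simpa using this
      · exfalso; have := j.isLt; simp at hj; omega
    · have := h (Fin.last (x + 1)) (by simp)
      simpa using this
  · rintro ⟨h1, h2⟩ j hj
    rcases hj with hj | hj
    · have hjx : (j : ℕ) < x + 1 := by simp at hj ⊢; omega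
      rw [snoc_of_lt a' b j hjx]
      have := h1 ⟨(j : ℕ), hjx⟩ (by simp at hj ⊢; omega)
      simpa using this
    · have : j = Fin.last (x + 1) := by apply Fin.ext; simp at hj ⊢; omega
      subst this
      simpa using h2


lemma iso_snoc_split :
    iso (Fin.snoc a' b : Fin (x + 2) → Bool) =
      (∑ i : Fin x, if IsIsolated a' (i.castSucc) then 1 else 0)
      + (if IsIsolated (Fin.snoc a' b : Fin (x + 2) → Bool) ((Fin.last x).castSucc) then 1 else 0)
      + (if IsIsolated (Fin.snoc a' b : Fin (x + 2) → Bool) (Fin.last (x + 1)) then 1 else 0) := by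
  rw [iso_eq_sum, Fin.sum_univ_castSucc, Fin.sum_univ_castSucc]
  congr 2
  apply Finset.sum_congr rfl
  intro i _
  congr 1
  rw [eq_iff_iff]
  exact isIso_castSucc_lt a' b i.castSucc (by simpa using i.isLt)

lemma iso_split :
    iso a' = (∑ i : Fin x, if IsIsolated a' (i.castSucc) then 1 else 0)
      + (if IsIsolated a' (Fin.last x) then 1 else 0) := by
  rw [iso_eq_sum, Fin.sum_univ_castSucc]

lemma iso_snoc_ne (h : b ≠ a' (Fin.last x)) :
    iso (Fin.snoc a' b : Fin (x + 2) → Bool) = iso a' + 1 := by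
  have h3 : IsIsolated (Fin.snoc a' b : Fin (x + 2) → Bool) ((Fin.last x).castSucc) ↔
      IsIsolated a' (Fin.last x) := by
    rw [isIso_castSucc_last]
    exact ⟨fun h' => h'.1, fun h' => ⟨h', Ne.symm h⟩⟩
  rw [iso_snoc_split, iso_split a', if_pos ((isIso_last a' b).2 h), if_congr h3 rfl rfl]

lemma iso_snoc_eq_pos (h : b = a' (Fin.last x)) (h2 : IsIsolated a' (Fin.last x)) :
    iso (Fin.snoc a' b : Fin (x + 2) → Bool) + 1 = iso a' := by
  have hA : ¬ IsIsolated (Fin.snoc a' b : Fin (x + 2) → Bool) (Fin.last (x + 1)) :=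
    fun h' => (isIso_last a' b).1 h' h
  have hB : ¬ IsIsolated (Fin.snoc a' b : Fin (x + 2) → Bool) ((Fin.last x).castSucc) :=
    fun h' => ((isIso_castSucc_last a' b).1 h').2 h.symm
  rw [iso_snoc_split, iso_split a', if_neg hA, if_neg hB, if_pos h2]

lemma iso_snoc_eq_neg (h : b = a' (Fin.last x)) (h2 : ¬IsIsolated a' (Fin.last x)) :
    iso (Fin.snoc a' b : Fin (x + 2) → Bool) = iso a' := by
  have hA : ¬ IsIsolated (Fin.snoc a' b : Fin (x + 2) → Bool) (Fin.last (x + 1)) :=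
    fun h' => (isIso_last a' b).1 h' h
  have hB : ¬ IsIsolated (Fin.snoc a' b : Fin (x + 2) → Bool) ((Fin.last x).castSucc) :=
    fun h' => h2 ((isIso_castSucc_last a' b).1 h').1
  rw [iso_snoc_split, iso_split a', if_neg hA, if_neg hB, if_neg h2]

end snoc

/-- `seqCount x y` is the number of sequences `a₁a₂⋯a_x` with `a₁ = 0` and
`a_j ∈ {0,1}`, having exactly `y` isolated elements. -/
noncomputable def seqCount (x y : ℕ) : ℕ :=
  Nat.card {a : Fin x → Bool //
    (∀ i : Fin x, (i : ℕ) = 0 → a i = false) ∧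
    Nat.card {i : Fin x // IsIsolated a i} = y}

lemma natcard_iso {x : ℕ} (a : Fin x → Bool) :
    Nat.card {i : Fin x // IsIsolated a i} = iso a := by
  rw [Nat.card_eq_fintype_card, Fintype.card_subtype, iso]

lemma seqCount_eq (x y : ℕ) :
    seqCount x y = (Finset.univ.filter
      (fun a : Fin x → Bool => (∀ i : Fin x, (i : ℕ) = 0 → a i = false) ∧ iso a = y)).card := by
  classical
  rw [seqCount, Nat.card_eq_fintype_card, Fintype.card_subtype]
  congr 1
  apply Finset.filter_congr
  intro a _
  rw [natcard_iso]

open Finset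

def Af (n y : ℕ) : ℕ :=
  (univ.filter (fun a : Fin (n + 1) → Bool =>
    a 0 = false ∧ iso a = y ∧ IsIsolated a (Fin.last n))).card

def Bf (n y : ℕ) : ℕ :=
  (univ.filter (fun a : Fin (n + 1) → Bool =>
    a 0 = false ∧ iso a = y ∧ ¬IsIsolated a (Fin.last n))).card

def Cf (n y : ℕ) : ℕ :=
  (univ.filter (fun a : Fin (n + 1) → Bool => a 0 = false ∧ iso a = y)).card

lemma Cf_eq (n y : ℕ) : Cf n y = Af n y + Bf n y := by
  classical
  rw [Cf, Af, Bf,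
    ← Finset.card_filter_add_card_filter_not
      (s := univ.filter (fun a : Fin (n + 1) → Bool => a 0 = false ∧ iso a = y))
      (p := fun a => IsIsolated a (Fin.last n))]
  congr 1
  · rw [Finset.filter_filter]
    congr 1
    apply Finset.filter_congr; intro a _; tauto
  · rw [Finset.filter_filter]
    congr 1
    apply Finset.filter_congr; intro a _; tauto

lemma init_zero {n : ℕ} (a : Fin (n + 2) → Bool) : Fin.init a 0 = a 0 := by
  simp [Fin.init]

lemma Af_succ (n y : ℕ) : Af (n + 1) (y + 1) = Cf n y := by
  classical
  rw [Af, Cf]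
  apply card_nbij' (fun a => Fin.init a)
    (fun a' => Fin.snoc a' (!a' (Fin.last n)))
  · intro a ha
    rw [mem_coe, mem_filter] at ha
    obtain ⟨-, h0, hiso, hlast⟩ := ha
    have hd : a (Fin.last (n + 1)) ≠ Fin.init a (Fin.last n) := by
      rw [← Fin.snoc_init_self a] at hlast
      exact (isIso_last _ _).1 hlast
    have hiso' : iso (Fin.init a) = y := by
      have h2 : iso a = iso (Fin.init a) + 1 := by
        conv_lhs => rw [← Fin.snoc_init_self a]
        exact iso_snoc_ne _ _ hd
      omega
    rw [mem_coe, mem_filter]; beta_reduce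
    exact ⟨mem_univ _, by rw [init_zero]; exact h0, hiso'⟩
  · intro a' ha'
    rw [mem_coe, mem_filter] at ha'
    obtain ⟨-, h0, hiso⟩ := ha'
    have hd : (!a' (Fin.last n)) ≠ a' (Fin.last n) := Bool.not_ne_self _
    rw [mem_coe, mem_filter]; beta_reduce
    refine ⟨mem_univ _, ?_, ?_, (isIso_last _ _).2 hd⟩
    · have : (0 : Fin (n + 2)) = Fin.castSucc 0 := rfl
      rw [this, Fin.snoc_castSucc]; exact h0
    · rw [iso_snoc_ne _ _ hd, hiso]
  · intro a ha
    rw [mem_coe, mem_filter] at ha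
    obtain ⟨-, h0, hiso, hlast⟩ := ha
    have hd : a (Fin.last (n + 1)) ≠ Fin.init a (Fin.last n) := by
      rw [← Fin.snoc_init_self a] at hlast
      exact (isIso_last _ _).1 hlast
    have : (!Fin.init a (Fin.last n)) = a (Fin.last (n + 1)) := by
      revert hd
      cases h1 : a (Fin.last (n + 1)) <;> cases h2 : Fin.init a (Fin.last n) <;> simp
    beta_reduce
    rw [this, Fin.snoc_init_self]
  · intro a' _
    exact Fin.init_snoc _ _

lemma Af_last_zero (n : ℕ) : Af (n + 1) 0 = 0 := by
  classical
  rw [Af, Finset.card_eq_zero, Finset.filter_eq_empty_iff]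
  rintro a - ⟨h0, hiso, hlast⟩
  have hd : a (Fin.last (n + 1)) ≠ Fin.init a (Fin.last n) := by
    rw [← Fin.snoc_init_self a] at hlast
    exact (isIso_last _ _).1 hlast
  have h2 : iso a = iso (Fin.init a) + 1 := by
    conv_lhs => rw [← Fin.snoc_init_self a]
    exact iso_snoc_ne _ _ hd
  omega

lemma Bf_succ (n y : ℕ) : Bf (n + 1) y = Af n (y + 1) + Bf n y := by
  classical
  rw [Bf]
  have key : #(univ.filter (fun a : Fin (n + 2) → Bool =>
      a 0 = false ∧ iso a = y ∧ ¬IsIsolated a (Fin.last (n + 1)))) =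
      #(univ.filter (fun a' : Fin (n + 1) → Bool => a' 0 = false ∧
        ((IsIsolated a' (Fin.last n) ∧ iso a' = y + 1) ∨
         (¬IsIsolated a' (Fin.last n) ∧ iso a' = y)))) := by
    apply card_nbij' (fun a => Fin.init a) (fun a' => Fin.snoc a' (a' (Fin.last n)))
    · intro a ha
      rw [mem_coe, mem_filter] at ha
      obtain ⟨-, h0, hiso, hlast⟩ := ha
      have hd : a (Fin.last (n + 1)) = Fin.init a (Fin.last n) := by
        by_contra hne
        apply hlast
        rw [← Fin.snoc_init_self a]
        exact (isIso_last _ _).2 hne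
      rw [mem_coe, mem_filter]; beta_reduce
      refine ⟨mem_univ _, by rw [init_zero]; exact h0, ?_⟩
      by_cases hII : IsIsolated (Fin.init a) (Fin.last n)
      · left
        refine ⟨hII, ?_⟩
        have h2 : iso a + 1 = iso (Fin.init a) := by
          conv_lhs => rw [← Fin.snoc_init_self a]
          exact iso_snoc_eq_pos _ _ hd hII
        omega
      · right
        refine ⟨hII, ?_⟩
        have h2 : iso a = iso (Fin.init a) := by
          conv_lhs => rw [← Fin.snoc_init_self a]
          exact iso_snoc_eq_neg _ _ hd hII
        omega
    · intro a' ha'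
      rw [mem_coe, mem_filter] at ha'
      obtain ⟨-, h0, hcases⟩ := ha'
      rw [mem_coe, mem_filter]; beta_reduce
      refine ⟨mem_univ _, ?_, ?_, ?_⟩
      · have : (0 : Fin (n + 2)) = Fin.castSucc 0 := rfl
        rw [this, Fin.snoc_castSucc]; exact h0
      · rcases hcases with ⟨hII, hiso⟩ | ⟨hII, hiso⟩
        · have := iso_snoc_eq_pos a' (a' (Fin.last n)) rfl hII
          omega
        · rw [iso_snoc_eq_neg a' (a' (Fin.last n)) rfl hII, hiso]
      · intro h'
        exact (isIso_last _ _).1 h' rfl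
    · intro a ha
      rw [mem_coe, mem_filter] at ha
      obtain ⟨-, h0, hiso, hlast⟩ := ha
      have hd : a (Fin.last (n + 1)) = Fin.init a (Fin.last n) := by
        by_contra hne
        apply hlast
        rw [← Fin.snoc_init_self a]
        exact (isIso_last _ _).2 hne
      beta_reduce
      rw [← hd, Fin.snoc_init_self]
    · intro a' _
      exact Fin.init_snoc _ _
  rw [key]
  have split : (univ.filter (fun a' : Fin (n + 1) → Bool => a' 0 = false ∧
        ((IsIsolated a' (Fin.last n) ∧ iso a' = y + 1) ∨
         (¬IsIsolated a' (Fin.last n) ∧ iso a' = y)))) =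
      (univ.filter (fun a' : Fin (n + 1) → Bool =>
        a' 0 = false ∧ iso a' = y + 1 ∧ IsIsolated a' (Fin.last n))) ∪
      (univ.filter (fun a' : Fin (n + 1) → Bool =>
        a' 0 = false ∧ iso a' = y ∧ ¬IsIsolated a' (Fin.last n))) := by
    ext a'
    simp only [mem_filter, mem_union, mem_univ, true_and]
    tauto
  rw [split, card_union_of_disjoint, Af, Bf]
  rw [disjoint_left]
  intro a h1 h2
  rw [mem_filter] at h1 h2
  exact h2.2.2.2 h1.2.2.2

lemma seqCount_succ_eq (n y : ℕ) : seqCount (n + 1) y = Cf n y := by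
  classical
  rw [seqCount_eq, Cf]
  congr 1
  apply Finset.filter_congr
  intro a _
  constructor
  · rintro ⟨h, h2⟩; exact ⟨h 0 rfl, h2⟩
  · rintro ⟨h, h2⟩
    refine ⟨fun i hi => ?_, h2⟩
    have : i = 0 := Fin.ext (by simpa using hi)
    rw [this]; exact h

lemma isIso_fin_one (a : Fin 1 → Bool) (i : Fin 1) : IsIsolated a i := by
  intro j hj
  fin_cases i <;> fin_cases j <;> simp at hj

lemma iso_fin_one (a : Fin 1 → Bool) : iso a = 1 := by
  rw [iso, filter_true_of_mem (fun i _ => isIso_fin_one a i)]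
  simp

lemma Af_zero_eq (y : ℕ) : Af 0 y = if y = 1 then 1 else 0 := by
  classical
  rw [Af]
  split
  · next h => subst h; decide
  · next h =>
    rw [card_eq_zero, filter_eq_empty_iff]
    rintro a - ⟨h0, hiso, -⟩
    rw [iso_fin_one] at hiso
    exact h hiso.symm

lemma Bf_zero_eq (y : ℕ) : Bf 0 y = 0 := by
  classical
  rw [Bf, card_eq_zero, filter_eq_empty_iff]
  rintro a - ⟨h0, -, hni⟩
  exact hni (isIso_fin_one a _)

lemma Af_zero' (n : ℕ) : Af n 0 = 0 := by
  cases n with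
  | zero => rw [Af_zero_eq]; simp
  | succ m => exact Af_last_zero m

lemma seqCount_zero' (y : ℕ) : seqCount 0 y = if y = 0 then 1 else 0 := by
  classical
  rw [seqCount_eq]
  split
  · next h => subst h; decide
  · next h =>
    rw [card_eq_zero, filter_eq_empty_iff]
    rintro a - ⟨-, hiso⟩
    have : iso a = 0 := rfl
    omega

lemma Af_succ' (n y : ℕ) : Af n (y + 1) = seqCount n y := by
  cases n with
  | zero =>
    rw [Af_zero_eq, seqCount_zero']
    simp
  | succ m => rw [Af_succ, ← seqCount_succ_eq]

lemma seqCount_one_eq (y : ℕ) : seqCount 1 y = if y = 1 then 1 else 0 := by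
  rw [seqCount_succ_eq, Cf_eq, Af_zero_eq, Bf_zero_eq]
  simp

lemma rec0 (n : ℕ) : seqCount (n + 2) 0 = seqCount (n + 1) 0 + seqCount n 0 := by
  have e1 : seqCount (n + 2) 0 = Cf (n + 1) 0 := seqCount_succ_eq (n + 1) 0
  have e2 := Cf_eq (n + 1) 0
  have e3 := Af_zero' (n + 1)
  have e4 := Bf_succ n 0
  have e5 := Af_succ' n 0
  have e6 := seqCount_succ_eq n 0
  have e7 := Cf_eq n 0
  have e8 := Af_zero' n
  omega

lemma rec1 (n z : ℕ) :
    seqCount (n + 2) (z + 1) + seqCount n z =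
      seqCount (n + 1) (z + 1) + seqCount (n + 1) z + seqCount n (z + 1) := by
  have e1 : seqCount (n + 2) (z + 1) = Cf (n + 1) (z + 1) := seqCount_succ_eq (n + 1) (z + 1)
  have e2 := Cf_eq (n + 1) (z + 1)
  have e3 := Af_succ' (n + 1) z
  have e4 := Bf_succ n (z + 1)
  have e5 := Af_succ' n (z + 1)
  have e6 := seqCount_succ_eq n (z + 1)
  have e7 := Cf_eq n (z + 1)
  have e8 := Af_succ' n z
  omega

lemma key_arith (x y : ℕ) :
    (seqCount x y : ℚ)
      - (if 1 ≤ x then (seqCount (x - 1) y : ℚ) else 0)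
      - (if 1 ≤ x ∧ 1 ≤ y then (seqCount (x - 1) (y - 1) : ℚ) else 0)
      - (if 2 ≤ x then (seqCount (x - 2) y : ℚ) else 0)
      + (if 2 ≤ x ∧ 1 ≤ y then (seqCount (x - 2) (y - 1) : ℚ) else 0)
      = (if x = 0 ∧ y = 0 then 1 else 0) - (if x = 1 ∧ y = 0 then 1 else 0) := by
  match x, y with
  | 0, y =>
    simp only [show ¬ (1:ℕ) ≤ 0 by omega, show ¬ (2:ℕ) ≤ 0 by omega, false_and, if_false,
      if_neg (by omega : ¬ ((0:ℕ) = 1 ∧ y = 0))]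
    rw [seqCount_zero']
    by_cases hy : y = 0 <;> simp [hy]
  | 1, y =>
    simp only [show (1:ℕ) ≤ 1 by omega, show ¬ (2:ℕ) ≤ 1 by omega, true_and, false_and, if_false,
      if_neg (by omega : ¬ ((1:ℕ) = 0 ∧ y = 0)), if_true]
    rw [seqCount_one_eq, seqCount_zero']
    match y with
    | 0 => norm_num
    | 1 => norm_num [seqCount_zero']
    | (z+2) =>
      norm_num [seqCount_zero']
      omega
  | (n+2), 0 =>
    rw [if_pos (show (1:ℕ) ≤ n + 2 by omega),
      if_neg (show ¬((1:ℕ) ≤ n + 2 ∧ (1:ℕ) ≤ 0) by omega),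
      if_pos (show (2:ℕ) ≤ n + 2 by omega),
      if_neg (show ¬((2:ℕ) ≤ n + 2 ∧ (1:ℕ) ≤ 0) by omega),
      if_neg (show ¬(n + 2 = 0 ∧ (0:ℕ) = 0) by omega),
      if_neg (show ¬(n + 2 = 1 ∧ (0:ℕ) = 0) by omega)]
    have h2 : ((seqCount (n + 2) 0 : ℕ) : ℚ) = (seqCount (n + 1) 0 : ℚ) + (seqCount n 0 : ℚ) := by
      exact_mod_cast congrArg (Nat.cast : ℕ → ℚ) (rec0 n)
    have e1 : n + 2 - 1 = n + 1 := by omega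
    have e2 : n + 2 - 2 = n := by omega
    rw [e1, e2]
    linarith
  | (n+2), (z+1) =>
    rw [if_pos (show (1:ℕ) ≤ n + 2 by omega),
      if_pos (show ((1:ℕ) ≤ n + 2 ∧ (1:ℕ) ≤ z + 1) by omega),
      if_pos (show (2:ℕ) ≤ n + 2 by omega),
      if_pos (show ((2:ℕ) ≤ n + 2 ∧ (1:ℕ) ≤ z + 1) by omega),
      if_neg (show ¬(n + 2 = 0 ∧ z + 1 = 0) by omega),
      if_neg (show ¬(n + 2 = 1 ∧ z + 1 = 0) by omega)]
    have h2 : ((seqCount (n+2) (z+1) : ℕ) : ℚ) + seqCount n z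
        = (seqCount (n+1) (z+1) : ℚ) + seqCount (n+1) z + seqCount n (z+1) := by
      exact_mod_cast congrArg (Nat.cast : ℕ → ℚ) (rec1 n z)
    have e1 : n + 2 - 1 = n + 1 := by omega
    have e2 : n + 2 - 2 = n := by omega
    have e3 : z + 1 - 1 = z := by omega
    rw [e1, e2, e3]
    linarith

open MvPowerSeries in
/-- The two-variable generating function `R = Σ r(x,y) uˣ vʸ` of the counting function
`r(x,y)` of binary sequences starting with `0` with exactly `y` isolated elements
satisfies `(1 − u − u·v − u² + u²·v) · R = 1 − u` in `ℚ⟦u,v⟧`. -/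
theorem isolated_count_generating_function
    (R : MvPowerSeries (Fin 2) ℚ)
    (hR : ∀ e : Fin 2 →₀ ℕ, MvPowerSeries.coeff e R = seqCount (e 0) (e 1)) :
    (1 - X 0 - X 0 * X 1 - (X 0) ^ 2 + (X 0) ^ 2 * X 1) * R
      = 1 - (X 0 : MvPowerSeries (Fin 2) ℚ) := by
  classical
  ext e
  have hm : ∀ i j : ℕ,
      ((Finsupp.single (0 : Fin 2) i + Finsupp.single 1 j) ≤ e) ↔ i ≤ e 0 ∧ j ≤ e 1 := by
    intro i j
    rw [Finsupp.le_def]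
    constructor
    · intro h
      refine ⟨?_, ?_⟩
      · have := h 0; simpa using this
      · have := h 1; simpa [Finsupp.single_apply] using this
    · rintro ⟨h0, h1⟩ s
      fin_cases s
      · simpa [Finsupp.single_apply] using h0
      · simpa [Finsupp.single_apply] using h1
  have hsub : ∀ i j : ℕ,
      (((e - (Finsupp.single (0 : Fin 2) i + Finsupp.single 1 j)) : Fin 2 →₀ ℕ) 0 = e 0 - i) ∧
      (((e - (Finsupp.single (0 : Fin 2) i + Finsupp.single 1 j)) : Fin 2 →₀ ℕ) 1 = e 1 - j) := by
    intro i j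
    constructor
    · rw [Finsupp.tsub_apply]; simp [Finsupp.single_apply]
    · rw [Finsupp.tsub_apply]; simp [Finsupp.single_apply]
  have c1 : (coeff e) ((X 0 : MvPowerSeries (Fin 2) ℚ) * R)
      = if 1 ≤ e 0 then (seqCount (e 0 - 1) (e 1) : ℚ) else 0 := by
    rw [X_def, coeff_monomial_mul]
    simp only [one_mul]
    by_cases hc : (Finsupp.single (0 : Fin 2) 1 ≤ e)
    · rw [if_pos hc, if_pos (Finsupp.single_le_iff.1 hc), hR]
      have d0 : ((e - Finsupp.single (0 : Fin 2) 1 : Fin 2 →₀ ℕ)) 0 = e 0 - 1 := by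
        rw [Finsupp.tsub_apply]; simp
      have d1 : ((e - Finsupp.single (0 : Fin 2) 1 : Fin 2 →₀ ℕ)) 1 = e 1 := by
        rw [Finsupp.tsub_apply]; simp [Finsupp.single_apply]
      rw [d0, d1]
    · rw [if_neg hc, if_neg (fun h => hc (Finsupp.single_le_iff.2 h))]
  have c2 : (coeff e) ((X 0 : MvPowerSeries (Fin 2) ℚ) * X 1 * R)
      = if 1 ≤ e 0 ∧ 1 ≤ e 1 then (seqCount (e 0 - 1) (e 1 - 1) : ℚ) else 0 := by
    rw [X_def, X_def, monomial_mul_monomial, one_mul, coeff_monomial_mul]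
    simp only [one_mul]
    by_cases hc : ((Finsupp.single (0 : Fin 2) 1 + Finsupp.single 1 1) ≤ e)
    · rw [if_pos hc, if_pos ((hm 1 1).1 hc), hR, (hsub 1 1).1, (hsub 1 1).2]
    · rw [if_neg hc, if_neg (fun h => hc ((hm 1 1).2 h))]
  have c3 : (coeff e) (((X 0 : MvPowerSeries (Fin 2) ℚ)) ^ 2 * R)
      = if 2 ≤ e 0 then (seqCount (e 0 - 2) (e 1) : ℚ) else 0 := by
    rw [X_pow_eq, coeff_monomial_mul]
    simp only [one_mul]
    by_cases hc : (Finsupp.single (0 : Fin 2) 2 ≤ e)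
    · rw [if_pos hc, if_pos (Finsupp.single_le_iff.1 hc), hR]
      have d0 : ((e - Finsupp.single (0 : Fin 2) 2 : Fin 2 →₀ ℕ)) 0 = e 0 - 2 := by
        rw [Finsupp.tsub_apply]; simp
      have d1 : ((e - Finsupp.single (0 : Fin 2) 2 : Fin 2 →₀ ℕ)) 1 = e 1 := by
        rw [Finsupp.tsub_apply]; simp [Finsupp.single_apply]
      rw [d0, d1]
    · rw [if_neg hc, if_neg (fun h => hc (Finsupp.single_le_iff.2 h))]
  have c4 : (coeff e) (((X 0 : MvPowerSeries (Fin 2) ℚ)) ^ 2 * X 1 * R)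
      = if 2 ≤ e 0 ∧ 1 ≤ e 1 then (seqCount (e 0 - 2) (e 1 - 1) : ℚ) else 0 := by
    rw [X_pow_eq, X_def, monomial_mul_monomial, one_mul, coeff_monomial_mul]
    simp only [one_mul]
    by_cases hc : ((Finsupp.single (0 : Fin 2) 2 + Finsupp.single 1 1) ≤ e)
    · rw [if_pos hc, if_pos ((hm 2 1).1 hc), hR, (hsub 2 1).1, (hsub 2 1).2]
    · rw [if_neg hc, if_neg (fun h => hc ((hm 2 1).2 h))]
  have r1 : (if e = 0 then (1 : ℚ) else 0) = if e 0 = 0 ∧ e 1 = 0 then 1 else 0 := by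
    congr 1
    rw [eq_iff_iff]
    constructor
    · intro h; subst h; simp
    · rintro ⟨h0, h1⟩
      ext s
      fin_cases s
      · simpa using h0
      · simpa using h1
  have r2 : (if e = Finsupp.single (0 : Fin 2) 1 then (1 : ℚ) else 0)
      = if e 0 = 1 ∧ e 1 = 0 then 1 else 0 := by
    congr 1
    rw [eq_iff_iff]
    constructor
    · intro h; subst h
      constructor
      · simp
      · simp [Finsupp.single_apply]
    · rintro ⟨h0, h1⟩
      ext s
      fin_cases s
      · simpa using h0
      · simpa [Finsupp.single_apply] using h1
  rw [add_mul, sub_mul, sub_mul, sub_mul, one_mul]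
  rw [map_add, map_sub, map_sub, map_sub, map_sub]
  rw [hR, c1, c2, c3, c4, coeff_one, coeff_X, r1, r2]
  exact key_arith (e 0) (e 1)
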